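/- The three-qubit operator W_SEP = (1/2)(|0⟩⟨0|⊗|0⟩⟨0|⊗|0⟩⟨0| + |1⟩⟨1|⊗|0⟩⟨0|⊗|1⟩⟨1| + |+⟩⟨+|⊗|1⟩⟨1|⊗|+⟩⟨+| + |−⟩⟨−|⊗|1⟩⟨1|⊗|−⟩⟨−|) is separable in the bipartition A_I | A_O B_I but admits no decomposition W_SEP = Σ_i p_i ρ_i^{A_I} ⊗ D_i^{A_O B_I} with ρ_i density operators, p_i a probability distribution, D_i ⪰ 0 and tr_{B_I}(D_i) = 1^{A_O} for all i. -/

import Mathlib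

open Matrix ComplexOrder

/-- `|u⟩⟨u| ⊗ |v⟩⟨v| ⊗ |w⟩⟨w|` on three qubits, written entrywise. -/
noncomputable def trip (u v w : Fin 2 → ℂ) :
    Matrix (Fin 2 × Fin 2 × Fin 2) (Fin 2 × Fin 2 × Fin 2) ℂ :=
  Matrix.of fun p q =>
    (u p.1 * star (u q.1)) * (v p.2.1 * star (v q.2.1)) * (w p.2.2 * star (w q.2.2))

lemma outer_psd {n : Type*} [Fintype n] (c : ℝ) (hc : 0 ≤ c) (f : n → ℂ) :
    (Matrix.of fun p q => (c : ℂ) * (f p * star (f q))).PosSemidef := by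
  have h := Matrix.posSemidef_conjTranspose_mul_self
    (Matrix.of fun (_ : Unit) q => ((Real.sqrt c : ℝ) : ℂ) * star (f q))
  convert h using 1
  ext p q
  simp only [Matrix.mul_apply, Matrix.conjTranspose_apply, Matrix.of_apply,
    Complex.star_def, _root_.map_mul, Complex.conj_conj, Complex.conj_ofReal,
    Finset.univ_unique, Finset.sum_singleton]
  have : ((Real.sqrt c : ℝ) : ℂ) * ((Real.sqrt c : ℝ) : ℂ) = (c : ℂ) := by
    norm_cast
    exact Real.mul_self_sqrt hc
  linear_combination (- f p * (starRingEnd ℂ) (f q)) * this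

lemma psd_diag {n : Type*} [Fintype n] [DecidableEq n] {M : Matrix n n ℂ}
    (h : M.PosSemidef) (i : n) : ∃ r : ℝ, 0 ≤ r ∧ M i i = r := by
  have h2 := h.dotProduct_mulVec_nonneg (Pi.single i 1)
  have h3 : star (Pi.single i 1 : n → ℂ) ⬝ᵥ M.mulVec (Pi.single i 1) = M i i := by
    simp [dotProduct, Matrix.mulVec, Pi.single_apply, Finset.mul_sum]
  rw [h3] at h2
  rw [Complex.nonneg_iff] at h2
  exact ⟨(M i i).re, h2.1, (Complex.ext (by simp) (by simp [← h2.2])).symm⟩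

open scoped MatrixOrder in
lemma psd_zero {n : Type*} [Fintype n] [DecidableEq n] {M : Matrix n n ℂ}
    (h : M.PosSemidef) {i : n} (h0 : M i i = 0) (j : n) : M i j = 0 := by
  obtain ⟨B, hB⟩ := CStarAlgebra.nonneg_iff_eq_star_mul_self.mp h.nonneg
  rw [Matrix.star_eq_conjTranspose] at hB
  subst hB
  have h1 : ∀ k, B k i = 0 := by
    have h2 : ((∑ k, Complex.normSq (B k i) : ℝ) : ℂ) = 0 := by
      rw [← h0]
      simp [Matrix.mul_apply, Matrix.conjTranspose_apply, Complex.normSq_eq_conj_mul_self,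
        Complex.star_def]
    have h3 : (∑ k, Complex.normSq (B k i) : ℝ) = 0 := by exact_mod_cast h2
    intro k
    have := (Finset.sum_eq_zero_iff_of_nonneg (fun k _ => Complex.normSq_nonneg _)).mp h3 k
      (Finset.mem_univ k)
    exact Complex.normSq_eq_zero.mp this
  simp [Matrix.mul_apply, Matrix.conjTranspose_apply, h1]

/-- The process `W_SEP` is separable in the bipartition `A_I | A_O B_I`, but admits no
direct-cause decomposition `Σ_i p_i ρ_i^{A_I} ⊗ D_i^{A_O B_I}` with `ρ_i` states and
`D_i` Choi operators of channels (`D_i ⪰ 0`, `tr_{B_I}(D_i) = 1^{A_O}`). -/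
theorem stmt_17
    (e0 e1 ep em : Fin 2 → ℂ)
    (he0 : e0 = ![1, 0]) (he1 : e1 = ![0, 1])
    (hep : ep = ![((Real.sqrt 2 : ℂ))⁻¹, ((Real.sqrt 2 : ℂ))⁻¹])
    (hem : em = ![((Real.sqrt 2 : ℂ))⁻¹, -((Real.sqrt 2 : ℂ))⁻¹])
    (W : Matrix (Fin 2 × Fin 2 × Fin 2) (Fin 2 × Fin 2 × Fin 2) ℂ)
    (hW : W = (2 : ℂ)⁻¹ •
      (trip e0 e0 e0 + trip e1 e0 e1 + trip ep e1 ep + trip em e1 em)) :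
    (∃ (m : ℕ) (A : Fin m → Matrix (Fin 2) (Fin 2) ℂ)
       (B : Fin m → Matrix (Fin 2 × Fin 2) (Fin 2 × Fin 2) ℂ),
       (∀ k, (A k).PosSemidef) ∧ (∀ k, (B k).PosSemidef) ∧
       W = ∑ k, Matrix.of fun p q : Fin 2 × Fin 2 × Fin 2 =>
         A k p.1 q.1 * B k p.2 q.2) ∧
    ¬ (∃ (m : ℕ) (w : Fin m → ℝ) (ρs : Fin m → Matrix (Fin 2) (Fin 2) ℂ)
         (Ds : Fin m → Matrix (Fin 2 × Fin 2) (Fin 2 × Fin 2) ℂ),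
         (∀ k, 0 ≤ w k) ∧ (∑ k, w k) = 1 ∧
         (∀ k, (ρs k).PosSemidef) ∧ (∀ k, (ρs k).trace = 1) ∧
         (∀ k, (Ds k).PosSemidef) ∧
         (∀ k a a', (∑ b : Fin 2, Ds k (a, b) (a', b)) = if a = a' then 1 else 0) ∧
         W = ∑ k, (w k : ℂ) • Matrix.of fun p q : Fin 2 × Fin 2 × Fin 2 =>
           ρs k p.1 q.1 * Ds k p.2 q.2) := by
  constructor
  · -- separability
    refine ⟨4,
      fun k => Matrix.of fun p q =>
        ((1:ℝ) : ℂ) * ((![e0, e1, ep, em]) k p * star ((![e0, e1, ep, em]) k q)),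
      fun k => Matrix.of fun p q =>
        (((2:ℝ)⁻¹ : ℝ) : ℂ) * (((![e0, e0, e1, e1]) k p.1 * (![e0, e1, ep, em]) k p.2) *
          star ((![e0, e0, e1, e1]) k q.1 * (![e0, e1, ep, em]) k q.2)),
      fun k => outer_psd 1 zero_le_one _,
      fun k => outer_psd _ (by norm_num) _, ?_⟩
    subst hW
    ext p q
    simp only [Matrix.sum_apply, Matrix.of_apply, Matrix.smul_apply, Matrix.add_apply,
      Fin.sum_univ_four, trip, Matrix.cons_val_zero, Matrix.cons_val_one, Matrix.head_cons,
      Matrix.cons_val_two, Matrix.tail_cons, Matrix.cons_val_three, smul_eq_mul,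
      star_mul', Complex.ofReal_one, Complex.ofReal_inv, Complex.ofReal_ofNat]
    ring
  · rintro ⟨m, w, ρs, Ds, hw, hwsum, hρ, htr, hD, hpt, hWeq⟩
    have hE : ∀ a b c a' b' c' : Fin 2,
        W (a, b, c) (a', b', c') = ∑ k, (w k : ℂ) * (ρs k a a' * Ds k (b, c) (b', c')) := by
      intro a b c a' b' c'
      rw [hWeq, Matrix.sum_apply]
      exact Finset.sum_congr rfl fun k _ => rfl
    have hs2 : ((Real.sqrt 2 : ℝ) : ℂ) * ((Real.sqrt 2 : ℝ) : ℂ) = 2 := by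
      norm_cast
      exact Real.mul_self_sqrt (by norm_num)
    have hne : ((Real.sqrt 2 : ℝ) : ℂ) ≠ 0 := by
      intro hc
      rw [hc] at hs2
      norm_num at hs2
    have hW1 : W ((0 : Fin 2), (0 : Fin 2), (1 : Fin 2)) ((0 : Fin 2), (0 : Fin 2), (1 : Fin 2)) = 0 := by
      rw [hW, he0, he1, hep, hem]
      simp [trip]
    have hW2 : W ((1 : Fin 2), (0 : Fin 2), (0 : Fin 2)) ((1 : Fin 2), (0 : Fin 2), (0 : Fin 2)) = 0 := by
      rw [hW, he0, he1, hep, hem]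
      simp [trip]
    have hW3 : W ((0 : Fin 2), (1 : Fin 2), (0 : Fin 2)) ((1 : Fin 2), (1 : Fin 2), (1 : Fin 2)) ≠ 0 := by
      rw [hW, he0, he1, hep, hem]
      simp [trip]
    choose r0 hr0 h00 using fun k => psd_diag (hρ k) 0
    choose r1 hr1 h11 using fun k => psd_diag (hρ k) 1
    choose d0 hd0 hD00 using fun k => psd_diag (hD k) ((0 : Fin 2), (0 : Fin 2))
    choose d1 hd1 hD01 using fun k => psd_diag (hD k) ((0 : Fin 2), (1 : Fin 2))
    have hrsum : ∀ k, r0 k + r1 k = 1 := by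
      intro k
      have h := htr k
      rw [Matrix.trace] at h
      simp only [Fin.sum_univ_two, Matrix.diag_apply, h00, h11] at h
      exact_mod_cast h
    have hdsum : ∀ k, d0 k + d1 k = 1 := by
      intro k
      have h := hpt k 0 0
      rw [Fin.sum_univ_two, if_pos rfl, hD00, hD01] at h
      exact_mod_cast h
    have h1 : (0 : ℂ) = ∑ k, (w k : ℂ) * (ρs k 0 0 * Ds k (0, 1) (0, 1)) := by
      rw [← hW1]
      exact hE 0 0 1 0 0 1
    have h2 : (0 : ℂ) = ∑ k, (w k : ℂ) * (ρs k 1 1 * Ds k (0, 0) (0, 0)) := by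
      rw [← hW2]
      exact hE 1 0 0 1 0 0
    have h1' : ∀ k, w k * (r0 k * d1 k) = 0 := by
      have hc : ((∑ k, w k * (r0 k * d1 k) : ℝ) : ℂ) = 0 := by
        push_cast
        simp only [← h00, ← hD01]
        exact h1.symm
      have hr : (∑ k, w k * (r0 k * d1 k) : ℝ) = 0 := by exact_mod_cast hc
      intro k
      exact (Finset.sum_eq_zero_iff_of_nonneg
        (fun k _ => mul_nonneg (hw k) (mul_nonneg (hr0 k) (hd1 k)))).mp hr k (Finset.mem_univ k)
    have h2' : ∀ k, w k * (r1 k * d0 k) = 0 := by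
      have hc : ((∑ k, w k * (r1 k * d0 k) : ℝ) : ℂ) = 0 := by
        push_cast
        simp only [← h11, ← hD00]
        exact h2.symm
      have hr : (∑ k, w k * (r1 k * d0 k) : ℝ) = 0 := by exact_mod_cast hc
      intro k
      exact (Finset.sum_eq_zero_iff_of_nonneg
        (fun k _ => mul_nonneg (hw k) (mul_nonneg (hr1 k) (hd0 k)))).mp hr k (Finset.mem_univ k)
    have key : ∀ k, w k ≠ 0 → ρs k 0 1 = 0 := by
      intro k hk
      by_cases h : r0 k = 0
      · exact psd_zero (hρ k) (by rw [h00 k, h]; norm_num) 1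
      · have hd1k : d1 k = 0 := by
          rcases mul_eq_zero.mp (h1' k) with h' | h'
          · exact absurd h' hk
          · rcases mul_eq_zero.mp h' with h'' | h''
            · exact absurd h'' h
            · exact h''
        have hd0k : d0 k = 1 := by have := hdsum k; linarith
        have hr1k : r1 k = 0 := by
          rcases mul_eq_zero.mp (h2' k) with h' | h'
          · exact absurd h' hk
          · rcases mul_eq_zero.mp h' with h'' | h''
            · exact h''
            · rw [hd0k] at h''; norm_num at h''
        have h10 : ρs k 1 0 = 0 := psd_zero (hρ k) (by rw [h11 k, hr1k]; norm_num) 0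
        rw [← (hρ k).1.apply 0 1, h10, star_zero]
    have h3 := hE 0 1 0 1 1 1
    rw [Finset.sum_eq_zero (fun k _ => by
      by_cases hk : w k = 0
      · simp [hk]
      · simp [key k hk])] at h3
    exact hW3 h3
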